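/- Let X and Y be integrable real random variables that are symmetric in distribution (X has the same law as -X, and Y has the same law as -Y). If E[φ(|X|)] ≤ E[φ(|Y|)] for every increasing convex function φ : [0,∞) → ℝ (for which the expectations exist), then E[ψ(X)] ≤ E[ψ(Y)] for every convex function ψ : ℝ → ℝ for which the expectations exist. -/

import Mathlib

open Set MeasureTheory

lemma even_convex_mono {φ : ℝ → ℝ} (hc : ConvexOn ℝ univ φ)
    (he : ∀ t, φ (-t) = φ t) : MonotoneOn φ (Ici (0 : ℝ)) := by
  intro a ha b hb hab
  have ha0 : (0:ℝ) ≤ a := ha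
  rcases eq_or_lt_of_le (ha0.trans hab) with h | hb0
  · have : a = 0 := le_antisymm (hab.trans h.symm.le) ha0
    simp [this, ← h]
  · set t := (b - a) / (2 * b) with ht
    have ht0 : 0 ≤ t := div_nonneg (by linarith) (by linarith)
    have ht1 : t ≤ 1 := by
      rw [div_le_one (by linarith)]; linarith
    have key : t • (-b) + (1 - t) • b = a := by
      rw [smul_eq_mul, smul_eq_mul, ht]
      field_simp
      ring
    have h2 : φ (t • (-b) + (1 - t) • b) ≤ t • φ (-b) + (1 - t) • φ b :=
      hc.2 (mem_univ (-b)) (mem_univ b) ht0 (by linarith) (by ring)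
    rw [key] at h2
    calc φ a ≤ t • φ (-b) + (1 - t) • φ b := h2
      _ = φ b := by rw [he]; simp only [smul_eq_mul]; ring

theorem sym_icx_implies_cx
    {Ω₁ Ω₂ : Type*} [MeasurableSpace Ω₁] [MeasurableSpace Ω₂]
    (μ : Measure Ω₁) (ν : Measure Ω₂)
    [IsProbabilityMeasure μ] [IsProbabilityMeasure ν]
    (X : Ω₁ → ℝ) (Y : Ω₂ → ℝ)
    (hX : Integrable X μ) (hY : Integrable Y ν)
    (hXsym : Measure.map X μ = Measure.map (fun ω => -X ω) μ)
    (hYsym : Measure.map Y ν = Measure.map (fun ω => -Y ω) ν)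
    (hord : ∀ φ : ℝ → ℝ, MonotoneOn φ (Ici (0 : ℝ)) → ConvexOn ℝ (Ici (0 : ℝ)) φ →
      Integrable (fun ω => φ |X ω|) μ → Integrable (fun ω => φ |Y ω|) ν →
      ∫ ω, φ |X ω| ∂μ ≤ ∫ ω, φ |Y ω| ∂ν) :
    ∀ ψ : ℝ → ℝ, ConvexOn ℝ univ ψ →
      Integrable (fun ω => ψ (X ω)) μ → Integrable (fun ω => ψ (Y ω)) ν →
      ∫ ω, ψ (X ω) ∂μ ≤ ∫ ω, ψ (Y ω) ∂ν := by
  intro ψ hψ hiX hiY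
  have hcont : Continuous ψ := by
    exact continuousOn_univ.mp (hψ.continuousOn isOpen_univ)
  -- φ : the even convex function
  set φ : ℝ → ℝ := fun t => (ψ t + ψ (-t)) / 2 with hφdef
  have heven : ∀ t, φ (-t) = φ t := by
    intro t; simp only [hφdef, neg_neg]; ring
  have hφabs : ∀ x : ℝ, φ |x| = (ψ x + ψ (-x)) / 2 := by
    intro x
    rcases abs_cases x with ⟨h, _⟩ | ⟨h, _⟩
    · rw [h]
    · rw [h, heven]
  have hneg : ConvexOn ℝ univ (fun t => ψ (-t)) := by
    have := hψ.comp_affineMap (-(AffineMap.id ℝ ℝ))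
    simpa [Function.comp_def] using this
  have hφconv : ConvexOn ℝ univ φ := by
    have h := (hψ.add hneg).smul (by norm_num : (0:ℝ) ≤ 1/2)
    have : φ = (1/2 : ℝ) • (ψ + fun t => ψ (-t)) := by
      funext t
      simp [hφdef, Pi.smul_apply, smul_eq_mul]
      ring
    rw [this]; exact h
  have hφmono : MonotoneOn φ (Ici (0:ℝ)) := even_convex_mono hφconv heven
  -- symmetry consequences
  have hXm : AEMeasurable X μ := hX.aemeasurable
  have hYm : AEMeasurable Y ν := hY.aemeasurable
  have hsmX : AEStronglyMeasurable ψ (Measure.map X μ) := hcont.aestronglyMeasurable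
  have hsmY : AEStronglyMeasurable ψ (Measure.map Y ν) := hcont.aestronglyMeasurable
  have hiXn : Integrable (fun ω => ψ (-X ω)) μ := by
    have h1 : Integrable ψ (Measure.map X μ) := (integrable_map_measure hsmX hXm).mpr hiX
    rw [hXsym] at h1
    exact (integrable_map_measure (by rw [show (-X) = (fun ω => -X ω) from rfl, ← hXsym]; exact hsmX) hXm.neg).mp h1
  have hiYn : Integrable (fun ω => ψ (-Y ω)) ν := by
    have h1 : Integrable ψ (Measure.map Y ν) := (integrable_map_measure hsmY hYm).mpr hiY
    rw [hYsym] at h1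
    exact (integrable_map_measure (by rw [show (-Y) = (fun ω => -Y ω) from rfl, ← hYsym]; exact hsmY) hYm.neg).mp h1
  have heX : ∫ ω, ψ (-X ω) ∂μ = ∫ ω, ψ (X ω) ∂μ := by
    show ∫ ω, ψ ((-X) ω) ∂μ = _
    rw [← integral_map hXm.neg (by rw [show (-X) = (fun ω => -X ω) from rfl, ← hXsym]; exact hsmX), show (-X) = (fun ω => -X ω) from rfl, ← hXsym, integral_map hXm hsmX]
  have heY : ∫ ω, ψ (-Y ω) ∂ν = ∫ ω, ψ (Y ω) ∂ν := by
    show ∫ ω, ψ ((-Y) ω) ∂ν = _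
    rw [← integral_map hYm.neg (by rw [show (-Y) = (fun ω => -Y ω) from rfl, ← hYsym]; exact hsmY), show (-Y) = (fun ω => -Y ω) from rfl, ← hYsym, integral_map hYm hsmY]
  -- integrability of φ ∘ |·|
  have hiφX : Integrable (fun ω => φ |X ω|) μ := by
    have : (fun ω => φ |X ω|) = fun ω => (ψ (X ω) + ψ (-X ω)) / 2 := by
      funext ω; exact hφabs _
    rw [this]; exact (hiX.add hiXn).div_const 2
  have hiφY : Integrable (fun ω => φ |Y ω|) ν := by
    have : (fun ω => φ |Y ω|) = fun ω => (ψ (Y ω) + ψ (-Y ω)) / 2 := by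
      funext ω; exact hφabs _
    rw [this]; exact (hiY.add hiYn).div_const 2
  -- integral identities
  have hIX : ∫ ω, φ |X ω| ∂μ = ∫ ω, ψ (X ω) ∂μ := by
    calc ∫ ω, φ |X ω| ∂μ = ∫ ω, (ψ (X ω) + ψ (-X ω)) / 2 ∂μ := by
          congr 1; funext ω; exact hφabs _
      _ = (∫ ω, (ψ (X ω) + ψ (-X ω)) ∂μ) / 2 := integral_div 2 _
      _ = ((∫ ω, ψ (X ω) ∂μ) + ∫ ω, ψ (-X ω) ∂μ) / 2 := by rw [integral_add hiX hiXn]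
      _ = ∫ ω, ψ (X ω) ∂μ := by rw [heX]; ring
  have hIY : ∫ ω, φ |Y ω| ∂ν = ∫ ω, ψ (Y ω) ∂ν := by
    calc ∫ ω, φ |Y ω| ∂ν = ∫ ω, (ψ (Y ω) + ψ (-Y ω)) / 2 ∂ν := by
          congr 1; funext ω; exact hφabs _
      _ = (∫ ω, (ψ (Y ω) + ψ (-Y ω)) ∂ν) / 2 := integral_div 2 _
      _ = ((∫ ω, ψ (Y ω) ∂ν) + ∫ ω, ψ (-Y ω) ∂ν) / 2 := by rw [integral_add hiY hiYn]
      _ = ∫ ω, ψ (Y ω) ∂ν := by rw [heY]; ring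
  rw [← hIX, ← hIY]
  exact hord φ hφmono (hφconv.subset (subset_univ _) (convex_Ici 0)) hiφX hiφY
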